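/- Let φ : 𝔻 → 𝔻 be holomorphic with finite angular derivative at σ ∈ ∂𝔻 in the sense that, in the half-plane model F : ℍ → ℍ (conjugate of φ by the Cayley map sending σ to ∞), F(ζ)/ζ → 1 as ζ → ∞ non-tangentially. Then for ζ₁, ζ₂ ∈ ℍ, 0 ≤ k(ζ₁,ζ₂) - k(F(ζ₁),F(ζ₂)) ≤ k(F(ζ₁),ζ₁) + k(F(ζ₂),ζ₂), and moreover k(F(ζ),ζ) → 0 as ζ → ∞ non-tangentially; hence k(ζ₁,ζ₂) - k(F(ζ₁),F(ζ₂)) → 0 as ζ₁, ζ₂ → ∞ non-tangentially. -/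

import Mathlib

open Set Filter

def HalfPlane : Set ℂ := {z : ℂ | 0 < z.re}

noncomputable def pdistH (z w : ℂ) : ℝ :=
  ‖z - w‖ / ‖z + (starRingEnd ℂ) w‖

noncomputable def hdistH (z w : ℂ) : ℝ :=
  Real.log ((1 + pdistH z w) / (1 - pdistH z w))

/-- Non-tangential approach to `∞` in the right half-plane within `{|arg ζ| < θ}`. -/
noncomputable def sectorFilter (θ : ℝ) : Filter ℂ :=
  Filter.comap (fun z : ℂ => ‖z‖) Filter.atTop ⊓
    Filter.principal {ζ : ℂ | |Complex.arg ζ| < θ}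

lemma key_sq (z w : ℂ) :
    (‖z + (starRingEnd ℂ) w‖)^2 - (‖z - w‖)^2 = 4 * z.re * w.re := by
  rw [Complex.sq_norm, Complex.sq_norm]
  simp [Complex.normSq_apply, Complex.add_re, Complex.add_im, Complex.sub_re, Complex.sub_im]
  ring

lemma abs_sub_lt (z w : ℂ) (hz : 0 < z.re) (hw : 0 < w.re) :
    ‖z - w‖ < ‖z + (starRingEnd ℂ) w‖ := by
  have h := key_sq z w
  have h4 : 0 < 4 * z.re * w.re := by positivity
  have hsq : (‖z - w‖)^2 < (‖z + (starRingEnd ℂ) w‖)^2 := by linarith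
  exact lt_of_pow_lt_pow_left₀ 2 (norm_nonneg _) hsq

lemma pdistH_nonneg (z w : ℂ) : 0 ≤ pdistH z w :=
  div_nonneg (norm_nonneg _) (norm_nonneg _)

lemma pdistH_lt_one (z w : ℂ) (hz : 0 < z.re) (hw : 0 < w.re) : pdistH z w < 1 := by
  have h := abs_sub_lt z w hz hw
  have hd : 0 < ‖z + (starRingEnd ℂ) w‖ := (norm_nonneg _).trans_lt h
  exact (div_lt_one hd).2 h

lemma pdistH_symm (z w : ℂ) : pdistH z w = pdistH w z := by
  unfold pdistH
  rw [norm_sub_rev]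
  congr 1
  rw [← Complex.norm_conj (w + (starRingEnd ℂ) z)]
  congr 1
  simp [add_comm]

lemma hdistH_nonneg (z w : ℂ) (hz : 0 < z.re) (hw : 0 < w.re) : 0 ≤ hdistH z w := by
  have h0 := pdistH_nonneg z w
  have h1 := pdistH_lt_one z w hz hw
  apply Real.log_nonneg
  rw [le_div_iff₀ (by linarith)]
  linarith

/-- The identity `hdistH = 2 arsinh (|z-w| / (2 √(re z · re w)))`. -/
lemma hdistH_eq_arsinh (z w : ℂ) (hz : 0 < z.re) (hw : 0 < w.re) :
    hdistH z w = 2 * Real.arsinh (‖z - w‖ / (2 * Real.sqrt (z.re * w.re))) := by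
  set N := ‖z - w‖ with hN
  set D := ‖z + (starRingEnd ℂ) w‖ with hD
  have hNn : 0 ≤ N := norm_nonneg _
  have hND : N < D := abs_sub_lt z w hz hw
  have hDpos : 0 < D := hNn.trans_lt hND
  have hkey : D^2 - N^2 = 4 * z.re * w.re := key_sq z w
  have hR : 0 < z.re * w.re := by positivity
  set R := Real.sqrt (z.re * w.re) with hRdef
  have hRpos : 0 < R := Real.sqrt_pos.2 hR
  have hRsq : R^2 = z.re * w.re := Real.sq_sqrt hR.le
  set q := N / (2 * R) with hq
  have h1q : 1 + q^2 = (D / (2*R))^2 := by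
    rw [hq]
    field_simp
    nlinarith
  have hs : Real.sqrt (1 + q^2) = D / (2*R) := by
    rw [h1q, Real.sqrt_sq (by positivity)]
  have harsinh : Real.arsinh q = Real.log ((N + D)/(2*R)) := by
    rw [Real.arsinh, hs, hq]
    congr 1
    field_simp
  have hp : pdistH z w = N / D := rfl
  have h2R : (2*R)^2 = D^2 - N^2 := by rw [hkey]; nlinarith [hRsq]
  rw [hdistH, hp, harsinh]
  have h2 : (1 + N/D) / (1 - N/D) = ((N+D)/(2*R))^2 := by
    rw [div_pow, h2R]
    have hD0 : D ≠ 0 := hDpos.ne'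
    have hDmN : (0:ℝ) < D - N := by linarith
    have hDN0 : D^2 - N^2 ≠ 0 := by nlinarith
    field_simp
    ring
  rw [h2, Real.log_pow]
  push_cast
  ring

lemma im_I_mul (z : ℂ) : (Complex.I * z).im = z.re := by simp

lemma hdistH_eq_dist (z w : ℂ) (hz : 0 < z.re) (hw : 0 < w.re) :
    hdistH z w = dist (UpperHalfPlane.mk (Complex.I * z) (by simpa using hz))
      (UpperHalfPlane.mk (Complex.I * w) (by simpa using hw)) := by
  rw [UpperHalfPlane.dist_eq, hdistH_eq_arsinh z w hz hw]
  congr 2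
  rw [Complex.dist_eq, UpperHalfPlane.coe_mk, UpperHalfPlane.coe_mk,
    UpperHalfPlane.mk_im, UpperHalfPlane.mk_im, im_I_mul, im_I_mul]
  rw [show Complex.I * z - Complex.I * w = Complex.I * (z - w) by ring]
  simp

lemma hdistH_triangle (z u w : ℂ) (hz : 0 < z.re) (hu : 0 < u.re) (hw : 0 < w.re) :
    hdistH z w ≤ hdistH z u + hdistH u w := by
  rw [hdistH_eq_dist z w hz hw, hdistH_eq_dist z u hz hu, hdistH_eq_dist u w hu hw]
  exact dist_triangle _ _ _

lemma hdistH_symm (z w : ℂ) : hdistH z w = hdistH w z := by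
  rw [hdistH, hdistH, pdistH_symm]

lemma hdistH_mono {a b : ℝ} (ha : 0 ≤ a) (hab : a ≤ b) (hb : b < 1) :
    Real.log ((1 + a)/(1 - a)) ≤ Real.log ((1 + b)/(1 - b)) := by
  have h1a : (0:ℝ) < 1 - a := by linarith
  have h1b : (0:ℝ) < 1 - b := by linarith
  apply Real.log_le_log (by positivity)
  rw [div_le_div_iff₀ h1a h1b]
  nlinarith

lemma re_add_conj_pos {a b : ℂ} (ha : 0 < a.re) (hb : 0 < b.re) :
    a + (starRingEnd ℂ) b ≠ 0 := by
  intro h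
  have : (a + (starRingEnd ℂ) b).re = 0 := by rw [h]; simp
  rw [Complex.add_re, Complex.conj_re] at this
  linarith

lemma schwarz_pick (F : ℂ → ℂ) (hF : DifferentiableOn ℂ F HalfPlane)
    (hmap : Set.MapsTo F HalfPlane HalfPlane) {z w : ℂ}
    (hz : z ∈ HalfPlane) (hw : w ∈ HalfPlane) :
    pdistH (F z) (F w) ≤ pdistH z w := by
  have hzr : 0 < z.re := hz
  have hwr : 0 < w.re := hw
  set c := (starRingEnd ℂ) w with hc
  have hwc : w + c ≠ 0 := re_add_conj_pos hwr hwr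
  set ψ : ℂ → ℂ := fun u => (w + c * u) / (1 - u) with hψ
  -- basic facts on the ball
  have hball : ∀ u ∈ Metric.ball (0:ℂ) 1, (1:ℂ) - u ≠ 0 := by
    intro u hu h
    have : u = 1 := by linear_combination -h
    rw [this] at hu
    simp at hu
  have hψ_sub : ∀ u ∈ Metric.ball (0:ℂ) 1, ψ u - w = (w + c) * u / (1 - u) := by
    intro u hu
    have h1 := hball u hu
    rw [hψ]; field_simp; ring
  have hψ_add : ∀ u ∈ Metric.ball (0:ℂ) 1, ψ u + c = (w + c) / (1 - u) := by
    intro u hu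
    have h1 := hball u hu
    rw [hψ]; field_simp; ring
  have hψ_mem : ∀ u ∈ Metric.ball (0:ℂ) 1, ψ u ∈ HalfPlane := by
    intro u hu
    have h1 := hball u hu
    have hk := key_sq (ψ u) w
    rw [← hc, hψ_sub u hu, hψ_add u hu] at hk
    rw [norm_div, norm_div, norm_mul] at hk
    have hu1 : ‖u‖ < 1 := by simpa using hu
    have h1u : 0 < ‖1 - u‖ := norm_pos_iff.mpr h1
    have hwc' : 0 < ‖w + c‖ := norm_pos_iff.mpr hwc
    have hab : ‖w + c‖ * ‖u‖ / ‖1 - u‖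
        < ‖w + c‖ / ‖1 - u‖ :=
      (div_lt_div_iff_of_pos_right h1u).2 (mul_lt_of_lt_one_right hwc' hu1)
    have hpos : 0 < 4 * (ψ u).re * w.re := by
      rw [← hk]
      have := pow_lt_pow_left₀ hab (by positivity) (two_ne_zero)
      linarith
    have : 0 < (ψ u).re := by nlinarith
    exact this
  have hψd : DifferentiableOn ℂ ψ (Metric.ball (0:ℂ) 1) := by
    apply DifferentiableOn.div
    · exact (differentiableOn_const _).add ((differentiableOn_const _).mul differentiableOn_id)
    · exact (differentiableOn_const _).sub differentiableOn_id
    · exact hball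
  set g : ℂ → ℂ := fun u => (F (ψ u) - F w) / (F (ψ u) + (starRingEnd ℂ) (F w)) with hg
  have hFw : F w ∈ HalfPlane := hmap hw
  have habs_g : ∀ u, ‖g u‖ = pdistH (F (ψ u)) (F w) := by
    intro u; rw [hg]; simp only [pdistH, norm_div]
  have hFψ : DifferentiableOn ℂ (fun u => F (ψ u)) (Metric.ball (0:ℂ) 1) :=
    hF.comp hψd hψ_mem
  have hgd : DifferentiableOn ℂ g (Metric.ball (0:ℂ) 1) := by
    apply DifferentiableOn.div
    · exact hFψ.sub (differentiableOn_const _)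
    · exact hFψ.add (differentiableOn_const _)
    · intro u hu
      exact re_add_conj_pos (hmap (hψ_mem u hu)) hFw
  have hgm : Set.MapsTo g (Metric.ball (0:ℂ) 1) (Metric.ball (0:ℂ) 1) := by
    intro u hu
    rw [Metric.mem_ball, dist_zero_right, habs_g]
    exact pdistH_lt_one _ _ (hmap (hψ_mem u hu)) hFw
  have hψ0 : ψ 0 = w := by rw [hψ]; simp
  have hg0 : g 0 = 0 := by rw [hg]; simp [hψ0]
  -- apply the Schwarz lemma at u₀
  set u₀ := (z - w) / (z + c) with hu₀
  have hzc : z + c ≠ 0 := re_add_conj_pos hzr hwr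
  have hu₀abs : ‖u₀‖ = pdistH z w := by rw [hu₀, norm_div]; rfl
  have hu₀lt : ‖u₀‖ < 1 := by rw [hu₀abs]; exact pdistH_lt_one z w hzr hwr
  have hψu₀ : ψ u₀ = z := by
    rw [hψ, hu₀]
    field_simp
    rw [div_eq_iff (by rw [show z + c - (z - w) = c + w by ring]; rwa [add_comm] at hwc)]
    ring
  have := Complex.norm_le_norm_of_mapsTo_ball hgd (hgm.mono_right Metric.ball_subset_closedBall) hg0 hu₀lt
  rw [habs_g, hψu₀, hu₀abs] at this
  exact this

lemma hdistH_le_hdistH {z w z' w' : ℂ} (h : pdistH z' w' ≤ pdistH z w)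
    (hlt : pdistH z w < 1) : hdistH z' w' ≤ hdistH z w :=
  hdistH_mono (pdistH_nonneg _ _) h hlt

lemma sector_eventually {θ : ℝ} (hθ : 0 < θ) (hθ' : θ < Real.pi / 2) :
    ∀ᶠ ζ in sectorFilter θ, ζ ∈ HalfPlane ∧ ‖ζ‖ * Real.cos θ ≤ ζ.re := by
  rw [sectorFilter, eventually_inf_principal]
  have h1 : ∀ᶠ ζ in Filter.comap (fun z : ℂ => ‖z‖) Filter.atTop, 1 ≤ ‖ζ‖ :=
    tendsto_comap.eventually (eventually_ge_atTop 1)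
  filter_upwards [h1] with ζ h1ζ hargζ
  have hζ0 : ζ ≠ 0 := by
    intro h; rw [h] at h1ζ; simp at h1ζ; linarith
  have hpi := Real.pi_pos
  have hcosθ : 0 < Real.cos θ := Real.cos_pos_of_mem_Ioo ⟨by linarith, hθ'⟩
  have hcos : Real.cos θ ≤ Real.cos (Complex.arg ζ) := by
    rw [← Real.cos_abs (Complex.arg ζ)]
    exact Real.cos_le_cos_of_nonneg_of_le_pi (abs_nonneg _) (by linarith) (le_of_lt hargζ)
  have habs : 0 < ‖ζ‖ := by linarith
  have hre : ζ.re = ‖ζ‖ * Real.cos (Complex.arg ζ) := by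
    rw [Complex.cos_arg hζ0]
    field_simp
  constructor
  · show 0 < ζ.re
    rw [hre]; nlinarith
  · rw [hre]; nlinarith

theorem defect_tendsto_zero_of_angular_derivative_one (F : ℂ → ℂ)
    (hF : DifferentiableOn ℂ F HalfPlane)
    (hmap : MapsTo F HalfPlane HalfPlane)
    (hder : ∀ θ : ℝ, 0 < θ → θ < Real.pi / 2 →
      Tendsto (fun ζ : ℂ => F ζ / ζ) (sectorFilter θ) (nhds 1)) :
    (∀ ζ₁ ∈ HalfPlane, ∀ ζ₂ ∈ HalfPlane,
        0 ≤ hdistH ζ₁ ζ₂ - hdistH (F ζ₁) (F ζ₂)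
        ∧ hdistH ζ₁ ζ₂ - hdistH (F ζ₁) (F ζ₂)
            ≤ hdistH (F ζ₁) ζ₁ + hdistH (F ζ₂) ζ₂)
    ∧ (∀ θ : ℝ, 0 < θ → θ < Real.pi / 2 →
        Tendsto (fun ζ : ℂ => hdistH (F ζ) ζ) (sectorFilter θ) (nhds 0))
    ∧ (∀ θ : ℝ, 0 < θ → θ < Real.pi / 2 →
        Tendsto (fun p : ℂ × ℂ => hdistH p.1 p.2 - hdistH (F p.1) (F p.2))
          (sectorFilter θ ×ˢ sectorFilter θ) (nhds 0)) := by
  have part1 : ∀ ζ₁ ∈ HalfPlane, ∀ ζ₂ ∈ HalfPlane,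
      0 ≤ hdistH ζ₁ ζ₂ - hdistH (F ζ₁) (F ζ₂)
      ∧ hdistH ζ₁ ζ₂ - hdistH (F ζ₁) (F ζ₂)
          ≤ hdistH (F ζ₁) ζ₁ + hdistH (F ζ₂) ζ₂ := by
    intro ζ₁ h₁ ζ₂ h₂
    have hF1 := hmap h₁
    have hF2 := hmap h₂
    have hcontract : hdistH (F ζ₁) (F ζ₂) ≤ hdistH ζ₁ ζ₂ :=
      hdistH_le_hdistH (schwarz_pick F hF hmap h₁ h₂) (pdistH_lt_one _ _ h₁ h₂)
    have t1 := hdistH_triangle ζ₁ (F ζ₁) ζ₂ h₁ hF1 h₂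
    have t2 := hdistH_triangle (F ζ₁) (F ζ₂) ζ₂ hF1 hF2 h₂
    have s1 := hdistH_symm ζ₁ (F ζ₁)
    constructor
    · linarith
    · linarith
  have part2 : ∀ θ : ℝ, 0 < θ → θ < Real.pi / 2 →
      Tendsto (fun ζ : ℂ => hdistH (F ζ) ζ) (sectorFilter θ) (nhds 0) := by
    intro θ hθ hθ'
    have hpi := Real.pi_pos
    have hcosθ : 0 < Real.cos θ := Real.cos_pos_of_mem_Ioo ⟨by linarith, hθ'⟩
    have hp0 : Tendsto (fun ζ : ℂ => pdistH (F ζ) ζ) (sectorFilter θ) (nhds 0) := by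
      have hlim : Tendsto (fun ζ : ℂ => ‖F ζ / ζ - 1‖ / Real.cos θ)
          (sectorFilter θ) (nhds 0) := by
        have h1 := (hder θ hθ hθ').sub_const 1
        rw [sub_self] at h1
        have h2 : Tendsto (fun ζ : ℂ => ‖F ζ / ζ - 1‖) (sectorFilter θ) (nhds 0) := by
          have := (continuous_norm.tendsto 0).comp h1
          simpa [Function.comp_def] using this
        simpa using h2.div_const (Real.cos θ)
      apply squeeze_zero' (Eventually.of_forall fun ζ => pdistH_nonneg _ _) ?_ hlim
      filter_upwards [sector_eventually hθ hθ'] with ζ hζ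
      obtain ⟨hζH, hζc⟩ := hζ
      have hζre : 0 < ζ.re := hζH
      have hζ0 : ζ ≠ 0 := by
        intro h; rw [h] at hζre; simp at hζre
      have habs : 0 < ‖ζ‖ := norm_pos_iff.mpr hζ0
      have hFζ : 0 < (F ζ).re := hmap hζH
      -- numerator identity
      have hnum : ‖F ζ - ζ‖ = ‖ζ‖ * ‖F ζ / ζ - 1‖ := by
        rw [← norm_mul]
        congr 1
        field_simp
      -- denominator bound
      have hden : ‖ζ‖ * Real.cos θ ≤ ‖F ζ + (starRingEnd ℂ) ζ‖ := by
        have h1 : (F ζ + (starRingEnd ℂ) ζ).re ≤ ‖F ζ + (starRingEnd ℂ) ζ‖ :=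
          Complex.re_le_norm _
        rw [Complex.add_re, Complex.conj_re] at h1
        linarith
      have hdpos : 0 < ‖ζ‖ * Real.cos θ := by positivity
      calc pdistH (F ζ) ζ ≤ (‖ζ‖ * ‖F ζ / ζ - 1‖) /
            (‖ζ‖ * Real.cos θ) := by
            rw [pdistH, hnum]
            exact div_le_div₀ (by positivity) le_rfl hdpos hden
        _ = ‖F ζ / ζ - 1‖ / Real.cos θ := by
            rw [mul_div_mul_left _ _ habs.ne']
    have hcont : ContinuousAt (fun t : ℝ => Real.log ((1 + t)/(1 - t))) 0 := by
      apply ContinuousAt.log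
      · exact (continuousAt_const.add continuousAt_id).div
          (continuousAt_const.sub continuousAt_id) (by norm_num)
      · norm_num
    have := hcont.tendsto.comp hp0
    simp only [Function.comp_def] at this
    norm_num at this
    exact this
  refine ⟨part1, part2, ?_⟩
  intro θ hθ hθ'
  have hup : Tendsto (fun p : ℂ × ℂ => hdistH (F p.1) p.1 + hdistH (F p.2) p.2)
      (sectorFilter θ ×ˢ sectorFilter θ) (nhds 0) := by
    have h1 := (part2 θ hθ hθ').comp (tendsto_fst (f := sectorFilter θ) (g := sectorFilter θ))
    have h2 := (part2 θ hθ hθ').comp (tendsto_snd (f := sectorFilter θ) (g := sectorFilter θ))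
    simpa using h1.add h2
  have hH : ∀ᶠ ζ in sectorFilter θ, ζ ∈ HalfPlane := by
    filter_upwards [sector_eventually hθ hθ'] with ζ hζ using hζ.1
  have hev : ∀ᶠ p : ℂ × ℂ in sectorFilter θ ×ˢ sectorFilter θ,
      p.1 ∈ HalfPlane ∧ p.2 ∈ HalfPlane :=
    (tendsto_fst.eventually hH).and (tendsto_snd.eventually hH)
  apply tendsto_of_tendsto_of_tendsto_of_le_of_le' tendsto_const_nhds hup
  · filter_upwards [hev] with p hp using (part1 _ hp.1 _ hp.2).1
  · filter_upwards [hev] with p hp using (part1 _ hp.1 _ hp.2).2
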